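/- Let P be a 2-torsion free prime unital ring with a nontrivial idempotent e₁, set e₂ = 1 − e₁, and let D : P → P be a commuting Jordan left centralizer such that e₁ D(m) e₂ = 0 for all m ∈ e₁Pe₂. Then D is the zero map. -/
import Mathlib


/-- Theorem 3.1: a commuting Jordan left centralizer D on a 2-torsion free prime unital
ring with a nontrivial idempotent, satisfying e₁ D(m) e₂ = 0 for all m ∈ e₁Pe₂,
is the zero map. -/
theorem commuting_jordan_left_centralizer_eq_zero {P : Type*} [Ring P]
    (htf : ∀ p : P, 2 • p = 0 → p = 0)
    (hprime : ∀ a b : P, (∀ x : P, a * x * b = 0) → a = 0 ∨ b = 0)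
    (e₁ : P) (he : e₁ * e₁ = e₁) (he0 : e₁ ≠ 0) (he1 : e₁ ≠ 1)
    (D : P → P)
    (hadd : ∀ x y : P, D (x + y) = D x + D y)
    (hJ : ∀ p : P, D (p ^ 2) = D p * p)
    (hC : ∀ p : P, D p * p = p * D p)
    (h12 : ∀ m : P, (∃ x : P, m = e₁ * x * (1 - e₁)) → e₁ * D m * (1 - e₁) = 0) :
    ∀ p : P, D p = 0 := by
  set c := D 1 with hc
  -- Step 1: D x = c * x
  have hD : ∀ x : P, D x = c * x := by
    intro x
    have h := hJ (x + 1)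
    rw [show (x+1:P)^2 = x^2 + (x + x) + 1 by noncomm_ring,
        hadd, hadd, hadd, hadd, hJ] at h
    simp only [mul_add, add_mul, mul_one, one_mul, add_assoc] at h
    have h1 := add_left_cancel h
    exact add_right_cancel h1
  -- Step 2: c is central
  have hcen : ∀ x : P, c * x = x * c := by
    intro x
    have h := hC (x + 1)
    rw [hadd, hD x] at h
    simp only [mul_add, add_mul, mul_one, one_mul, mul_assoc] at h
    have hx := hC x
    rw [hD x] at hx
    rw [← hc, ← mul_assoc c x x, hx] at h
    exact add_right_cancel (add_left_cancel h)
  -- Step 3: c * e₁ = 0 by primeness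
  have hs : (1 - e₁) * (1 - e₁) = (1 - e₁) := by
    have : (1 - e₁) * (1 - e₁) = 1 - e₁ - e₁ + e₁ * e₁ := by noncomm_ring
    rw [this, he]; abel
  have h3 : ∀ x : P, (c * e₁) * x * (1 - e₁) = 0 := by
    intro x
    have h := h12 (e₁ * x * (1 - e₁)) ⟨x, rfl⟩
    rw [hD] at h
    calc (c * e₁) * x * (1 - e₁)
        = e₁ * (c * (e₁ * x * (1 - e₁))) * (1 - e₁) := by
          simp only [← mul_assoc]
          rw [← hcen e₁, mul_assoc c e₁ e₁, he, mul_assoc (c * e₁ * x), hs]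
      _ = 0 := h
  have hce : c * e₁ = 0 := by
    rcases hprime (c * e₁) (1 - e₁) h3 with h | h
    · exact h
    · exact absurd (by rw [sub_eq_zero] at h; exact h.symm : e₁ = (1:P)) he1
  -- Step 4: c = 0 by primeness
  have hc0 : c = 0 := by
    rcases hprime e₁ c (fun x => by
      rw [mul_assoc, ← hcen, ← mul_assoc, ← hcen, hce, zero_mul]) with h | h
    · exact absurd h he0
    · exact h
  intro p
  rw [hD, hc0, zero_mul]
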